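/- Let d ∈ ℕ, let L₁, L₂ : EuclideanSpace ℝ (Fin d) → ℝ be three times continuously differentiable, let α > 0, and fix w₀. For h > 0 define the modified loss L̃_h(w) = L₁(w) + α·L₂(w) + (h/4)·‖gradient L₁ w‖² + (h·α²/4)·‖gradient L₂ w‖², and the Lie bracket [∇L₁,∇L₂](w) = (fderiv ℝ (gradient L₂) w)(gradient L₁ w) − (fderiv ℝ (gradient L₁) w)(gradient L₂ w). Suppose for each sufficiently small h > 0 the curve w_h : ℝ → EuclideanSpace ℝ (Fin d) satisfies w_h(0) = w₀ and HasDerivAt w_h (−gradient L̃_h (w_h t) + (h·α/2) • [∇L₁,∇L₂](w_h t)) t for all t ∈ [0,h]. Let w₂(h) = w₁(h) − α·h·gradient L₂ (w₁(h)) with w₁(h) = w₀ − h·gradient L₁ (w₀) be the composition of the two discrete gradient updates. Then w_h(h) − w₂(h) = O(h³) as h → 0⁺. -/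

import Mathlib

set_option maxHeartbeats 1600000

open Asymptotics InnerProductSpace Set Metric

noncomputable section AuxStmt4

section gradPart
variable {E : Type*} [NormedAddCommGroup E] [InnerProductSpace ℝ E] [CompleteSpace E]

example : (starRingEnd ℝ) = RingHom.id ℝ := rfl

lemma contDiff_gradient {f : E → ℝ} (hf : ContDiff ℝ 3 f) : ContDiff ℝ 2 (gradient f) := by
  have h1 : ContDiff ℝ 2 (fderiv ℝ f) := hf.fderiv_right (by norm_num)
  exact (((toDual ℝ E).symm : StrongDual ℝ E ≃ₗᵢ[ℝ] E).contDiff).comp h1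

local notation "⟪" x ", " y "⟫" => @inner ℝ _ _ x y

lemma gradient_inner_apply {f : E → ℝ} (v x : E) : ⟪gradient f v, x⟫ = fderiv ℝ f v x :=
  toDual_symm_apply

lemma fderiv_gradient_symm {f : E → ℝ} (hf : ContDiff ℝ 3 f) (u x y : E) :
    ⟪fderiv ℝ (gradient f) u x, y⟫ = ⟪x, fderiv ℝ (gradient f) u y⟫ := by
  have h1 : ContDiff ℝ 2 (fderiv ℝ f) := hf.fderiv_right (by norm_num)
  have h2 : HasFDerivAt (fderiv ℝ f) (fderiv ℝ (fderiv ℝ f) u) u :=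
    (h1.differentiable (by norm_num)).differentiableAt.hasFDerivAt
  have hg : HasFDerivAt (gradient f) (fderiv ℝ (gradient f) u) u := by
    have : ContDiff ℝ 2 (gradient f) := contDiff_gradient hf
    exact (this.differentiable (by norm_num)).differentiableAt.hasFDerivAt
  have key : ∀ z w : E, ⟪fderiv ℝ (gradient f) u z, w⟫ = fderiv ℝ (fderiv ℝ f) u z w := by
    intro z w
    -- ψ v = ⟪gradient f v, w⟫ = fderiv f v w
    have hA : HasFDerivAt (fun v => ⟪w, gradient f v⟫)
        ((innerSL ℝ w).comp (fderiv ℝ (gradient f) u)) u :=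
      (innerSL ℝ w).hasFDerivAt.comp u hg
    have hB : HasFDerivAt (fun v => (fderiv ℝ f v) w)
        ((ContinuousLinearMap.apply ℝ ℝ w).comp (fderiv ℝ (fderiv ℝ f) u)) u :=
      (ContinuousLinearMap.apply ℝ ℝ w).hasFDerivAt.comp u h2
    have hfun : (fun v => ⟪w, gradient f v⟫) = (fun v => (fderiv ℝ f v) w) := by
      funext v
      rw [real_inner_comm, gradient_inner_apply]
    rw [hfun] at hA
    have := hA.unique hB
    have := congrArg (fun (T : E →L[ℝ] ℝ) => T z) this
    simpa [real_inner_comm] using this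
  have hsym : IsSymmSndFDerivAt ℝ f u := hf.contDiffAt.isSymmSndFDerivAt (by norm_num)
  rw [key x y, real_inner_comm, key y x, hsym y x]

lemma hasGradientAt_norm_sq_grad {f : E → ℝ} (hf : ContDiff ℝ 3 f) (u : E) :
    HasGradientAt (fun v => ‖gradient f v‖ ^ 2)
      ((2 : ℝ) • fderiv ℝ (gradient f) u (gradient f u)) u := by
  have hg : ContDiff ℝ 2 (gradient f) := contDiff_gradient hf
  have hdg : HasFDerivAt (gradient f) (fderiv ℝ (gradient f) u) u :=
    (hg.differentiable (by norm_num)).differentiableAt.hasFDerivAt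
  have hinner := hdg.inner ℝ hdg
  have hfun : (fun v => ‖gradient f v‖ ^ 2) = (fun v => ⟪gradient f v, gradient f v⟫) := by
    funext v; rw [real_inner_self_eq_norm_sq]
  rw [hasGradientAt_iff_hasFDerivAt, hfun]
  refine hinner.congr_fderiv ?_
  symm
  ext z
  simp only [toDual_apply_apply, fderivInnerCLM_apply, ContinuousLinearMap.comp_apply,
    ContinuousLinearMap.prod_apply]
  rw [real_inner_smul_left]
  rw [fderiv_gradient_symm hf u (gradient f u) z,
    real_inner_comm (fderiv ℝ (gradient f) u z) (gradient f u)]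
  ring

lemma gradient_modified {L₁ L₂ : E → ℝ} (hL₁ : ContDiff ℝ 3 L₁) (hL₂ : ContDiff ℝ 3 L₂)
    (α h : ℝ) (u : E) :
    gradient (fun v => L₁ v + α * L₂ v + (h / 4) * ‖gradient L₁ v‖ ^ 2
      + (h * α ^ 2 / 4) * ‖gradient L₂ v‖ ^ 2) u
    = gradient L₁ u + α • gradient L₂ u
      + (h / 2) • fderiv ℝ (gradient L₁) u (gradient L₁ u)
      + (h * α ^ 2 / 2) • fderiv ℝ (gradient L₂) u (gradient L₂ u) := by
  have h₁ : HasFDerivAt L₁ (toDual ℝ E (gradient L₁ u)) u :=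
    ((hL₁.differentiable (by norm_num)).differentiableAt.hasGradientAt).hasFDerivAt
  have h₂ : HasFDerivAt L₂ (toDual ℝ E (gradient L₂ u)) u :=
    ((hL₂.differentiable (by norm_num)).differentiableAt.hasGradientAt).hasFDerivAt
  have h₃ : HasFDerivAt (fun v => ‖gradient L₁ v‖ ^ 2)
      (toDual ℝ E ((2 : ℝ) • fderiv ℝ (gradient L₁) u (gradient L₁ u))) u :=
    (hasGradientAt_norm_sq_grad hL₁ u).hasFDerivAt
  have h₄ : HasFDerivAt (fun v => ‖gradient L₂ v‖ ^ 2)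
      (toDual ℝ E ((2 : ℝ) • fderiv ℝ (gradient L₂) u (gradient L₂ u))) u :=
    (hasGradientAt_norm_sq_grad hL₂ u).hasFDerivAt
  have hsum := ((h₁.add (h₂.const_mul α)).add (h₃.const_mul (h / 4))).add
      (h₄.const_mul (h * α ^ 2 / 4))
  have hG : HasGradientAt (fun v => L₁ v + α * L₂ v + (h / 4) * ‖gradient L₁ v‖ ^ 2
      + (h * α ^ 2 / 4) * ‖gradient L₂ v‖ ^ 2)
      (gradient L₁ u + α • gradient L₂ u
        + (h / 2) • fderiv ℝ (gradient L₁) u (gradient L₁ u)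
        + (h * α ^ 2 / 2) • fderiv ℝ (gradient L₂) u (gradient L₂ u)) u := by
    rw [hasGradientAt_iff_hasFDerivAt]
    refine hsum.congr_fderiv ?_
    symm
    ext z
    simp only [toDual_apply_apply, ContinuousLinearMap.add_apply, ContinuousLinearMap.coe_smul',
      Pi.smul_apply, smul_eq_mul, inner_add_left, real_inner_smul_left]
    ring
  exact hG.gradient

end gradPart

section helpers
variable {E : Type*} [NormedAddCommGroup E] [NormedSpace ℝ E]
variable {F : Type*} [NormedAddCommGroup F] [NormedSpace ℝ F]

lemma lip_of_contDiff [ProperSpace E] {f : E → F} (hf : ContDiff ℝ 1 f) (c : E) (r : ℝ) :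
    ∃ C : ℝ, 0 ≤ C ∧ ∀ x ∈ closedBall c r, ∀ y ∈ closedBall c r,
      ‖f y - f x‖ ≤ C * ‖y - x‖ := by
  obtain ⟨C, hC⟩ := (isCompact_closedBall c r).exists_bound_of_continuousOn
    ((hf.continuous_fderiv one_ne_zero).continuousOn (s := closedBall c r))
  refine ⟨max C 0, le_max_right _ _, fun x hx y hy => ?_⟩
  exact (convex_closedBall c r).norm_image_sub_le_of_norm_fderiv_le
    (fun u _ => (hf.differentiable one_ne_zero).differentiableAt)
    (fun u hu => (hC u hu).trans (le_max_left _ _)) hx hy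

lemma bound_on [ProperSpace E] {f : E → F} (hf : Continuous f) (c : E) (r : ℝ) :
    ∃ C : ℝ, 0 ≤ C ∧ ∀ x ∈ closedBall c r, ‖f x‖ ≤ C := by
  obtain ⟨C, hC⟩ := (isCompact_closedBall c r).exists_bound_of_continuousOn hf.continuousOn
  exact ⟨max C 0, le_max_right _ _, fun x hx => (hC x hx).trans (le_max_left _ _)⟩

lemma taylor_one {f : E → F} {A : E → E →L[ℝ] F} {s : Set E} (hs : Convex ℝ s)
    {x y : E} (hx : x ∈ s) (hy : y ∈ s) {C : ℝ}
    (hf : ∀ u ∈ s, HasFDerivAt f (A u) u)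
    (hC : ∀ u ∈ s, ‖A u - A x‖ ≤ C) :
    ‖f y - f x - A x (y - x)‖ ≤ C * ‖y - x‖ := by
  have key := hs.norm_image_sub_le_of_norm_hasFDerivWithin_le
    (f := fun u => f u - A x u) (f' := fun u => A u - A x)
    (fun u hu => ((hf u hu).sub ((A x).hasFDerivAt)).hasFDerivWithinAt) hC hx hy
  have : f y - A x y - (f x - A x x) = f y - f x - A x (y - x) := by
    rw [(A x).map_sub]; abel
  rwa [this] at key

lemma traj_bound {φ : ℝ → E} {v : ℝ → E} {x₀ : E} {T M r : ℝ}
    (hφ0 : φ 0 = x₀) (hM : 0 ≤ M) (hMT : M * T < r)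
    (hd : ∀ t ∈ Icc (0 : ℝ) T, HasDerivAt φ (v t) t)
    (hb : ∀ t ∈ Icc (0 : ℝ) T, φ t ∈ closedBall x₀ r → ‖v t‖ ≤ M) :
    ∀ t ∈ Icc (0 : ℝ) T, ‖φ t - x₀‖ ≤ M * t := by
  have hcont : ContinuousOn φ (Icc 0 T) :=
    fun t ht => (hd t ht).continuousAt.continuousWithinAt
  set s : Set ℝ := {t | ‖φ t - x₀‖ ≤ M * t} with hs
  have main : Icc (0 : ℝ) T ⊆ s := by
    apply IsClosed.Icc_subset_of_forall_exists_gt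
    · have : s ∩ Icc 0 T = Icc 0 T ∩ (fun t => ‖φ t - x₀‖ - M * t) ⁻¹' Iic 0 := by
        ext t
        simp only [hs, mem_inter_iff, mem_setOf_eq, mem_preimage, mem_Iic, and_comm,
          sub_nonpos]
      rw [this]
      exact ContinuousOn.preimage_isClosed_of_isClosed
        (((hcont.sub continuousOn_const).norm).sub (continuousOn_const.mul continuousOn_id))
        isClosed_Icc isClosed_Iic
    · simp [hs, hφ0]
    · rintro x ⟨hxs, hx0, hxT⟩ y hy
      -- φ x is in the open ball of radius r
      have hxball : ‖φ x - x₀‖ < r := by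
        refine lt_of_le_of_lt hxs (lt_of_le_of_lt ?_ hMT)
        exact mul_le_mul_of_nonneg_left (le_of_lt hxT) hM
      have hcx : ContinuousAt φ x := (hd x ⟨hx0, le_of_lt hxT⟩).continuousAt
      obtain ⟨ε, hε, hball⟩ : ∃ ε > 0, ∀ z, |z - x| < ε → ‖φ z - x₀‖ < r := by
        have : {u : E | ‖u - x₀‖ < r} ∈ nhds (φ x) := by
          have : IsOpen {u : E | ‖u - x₀‖ < r} := by
            have : {u : E | ‖u - x₀‖ < r} = Metric.ball x₀ r := by
              ext u; simp [Metric.mem_ball, dist_eq_norm]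
            rw [this]; exact Metric.isOpen_ball
          exact this.mem_nhds hxball
        obtain ⟨ε, hε, h⟩ := Metric.eventually_nhds_iff.mp (hcx.eventually_mem this)
        exact ⟨ε, hε, fun z hz => h (by rw [Real.dist_eq]; exact hz)⟩
      set z := min (x + min (ε / 2) (y - x)) T with hz
      have hzx : x < z := by
        apply lt_min _ hxT
        have : 0 < min (ε / 2) (y - x) := lt_min (by linarith) (by simpa using hy)
        linarith
      have hzT : z ≤ T := min_le_right _ _
      have hzy : z ≤ y := le_trans (min_le_left _ _) (by
        have : min (ε / 2) (y - x) ≤ y - x := min_le_right _ _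
        linarith)
      -- on [x, z] the curve stays in the closed ball
      have hsub : Icc x z ⊆ Icc 0 T := fun u hu => ⟨le_trans hx0 hu.1, le_trans hu.2 hzT⟩
      have hubd : ∀ u ∈ Icc x z, ‖v u‖ ≤ M := by
        intro u hu
        refine hb u (hsub hu) ?_
        rw [Metric.mem_closedBall, dist_eq_norm]
        refine le_of_lt (hball u ?_)
        rw [abs_sub_lt_iff]
        constructor
        · have : u ≤ x + min (ε / 2) (y - x) := le_trans hu.2 (min_le_left _ _)
          have h2 : min (ε / 2) (y - x) ≤ ε / 2 := min_le_left _ _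
          linarith
        · linarith [hu.1, hε]
      have hmvt := (convex_Icc x z).norm_image_sub_le_of_norm_hasDerivWithin_le
        (f := φ) (f' := v)
        (fun u hu => (hd u (hsub hu)).hasDerivWithinAt) hubd
        (left_mem_Icc.mpr (le_of_lt hzx)) (right_mem_Icc.mpr (le_of_lt hzx))
      refine ⟨z, ?_, hzx, hzy⟩
      show ‖φ z - x₀‖ ≤ M * z
      calc ‖φ z - x₀‖ ≤ ‖φ z - φ x‖ + ‖φ x - x₀‖ := by
            have := norm_add_le (φ z - φ x) (φ x - x₀); simpa using this
        _ ≤ M * ‖z - x‖ + M * x := add_le_add hmvt hxs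
        _ = M * z := by
            rw [Real.norm_eq_abs, abs_of_nonneg (by linarith : (0:ℝ) ≤ z - x)]; ring
  intro t ht
  exact main ht
end helpers

section key
variable {E : Type*} [NormedAddCommGroup E] [NormedSpace ℝ E] [ProperSpace E]

lemma key_est (G Hf : E → E) (A : E → E →L[ℝ] E) (g₁ g₂ : E → E)
    (hGc : ContDiff ℝ 1 G) (hHc : ContDiff ℝ 1 Hf) (hAc : ContDiff ℝ 1 A)
    (hG' : ∀ u, HasFDerivAt G (A u) u) (hg₂ : ContDiff ℝ 2 g₂)
    (α : ℝ) (hα : 0 < α) (w₀ : E)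
    (hGw : G w₀ = -(g₁ w₀ + α • g₂ w₀))
    (hkey : Hf w₀ + (2⁻¹ : ℝ) • A w₀ (G w₀) = α • fderiv ℝ g₂ w₀ (g₁ w₀))
    (w : ℝ → ℝ → E)
    (hw0 : ∀ᶠ h in nhdsWithin (0 : ℝ) (Set.Ioi 0), w h 0 = w₀)
    (hw : ∀ᶠ h in nhdsWithin (0 : ℝ) (Set.Ioi 0), ∀ t ∈ Set.Icc (0 : ℝ) h,
      HasDerivAt (w h) (G (w h t) + h • Hf (w h t)) t) :
    (fun h : ℝ => w h h - ((w₀ - h • g₁ w₀) - (α * h) • g₂ (w₀ - h • g₁ w₀)))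
      =O[nhdsWithin 0 (Set.Ioi 0)] (fun h : ℝ => h ^ 3) := by
  have hDg₂ : ContDiff ℝ 1 (fderiv ℝ g₂) := hg₂.fderiv_right (by norm_num)
  have hg₂' : ∀ u, HasFDerivAt g₂ (fderiv ℝ g₂ u) u := fun u =>
    (hg₂.differentiable two_ne_zero).differentiableAt.hasFDerivAt
  obtain ⟨MG, hMG0, hMGb⟩ := bound_on hGc.continuous w₀ 1
  obtain ⟨MH, hMH0, hMHb⟩ := bound_on hHc.continuous w₀ 1
  obtain ⟨LG, hLG0, hLGb⟩ := lip_of_contDiff hGc w₀ 1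
  obtain ⟨LH, hLH0, hLHb⟩ := lip_of_contDiff hHc w₀ 1
  obtain ⟨LA, hLA0, hLAb⟩ := lip_of_contDiff hAc w₀ 1
  obtain ⟨L2, hL20, hL2b⟩ := lip_of_contDiff hDg₂ w₀ 1
  set M : ℝ := MG + MH with hMdef
  have hM0 : 0 ≤ M := by positivity
  set C₀ : ℝ := (LG + LH) * M with hC₀def
  have hC₀0 : 0 ≤ C₀ := by positivity
  set C₁ : ℝ := LA * M * M + ‖A w₀‖ * C₀ + ‖A w₀‖ * ‖Hf w₀‖ + LH * M with hC₁def
  have hC₁0 : 0 ≤ C₁ := by positivity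
  set C₂ : ℝ := α * (L2 * ‖g₁ w₀‖ * ‖g₁ w₀‖) with hC₂def
  have hC₂0 : 0 ≤ C₂ := by positivity
  set δ : ℝ := min 1 (min (1 / (M + 1)) (1 / (‖g₁ w₀‖ + 1))) with hδdef
  have hδ0 : 0 < δ := by
    refine lt_min one_pos (lt_min (by positivity) (by positivity))
  rw [Asymptotics.isBigO_iff]
  refine ⟨C₁ + C₂, ?_⟩
  have hsmall : ∀ᶠ h in nhdsWithin (0 : ℝ) (Set.Ioi 0), h < δ :=
    eventually_nhdsWithin_of_eventually_nhds (eventually_lt_nhds hδ0)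
  filter_upwards [hw0, hw, hsmall, self_mem_nhdsWithin] with h hw0h hwh hhδ hh0
  replace hh0 : 0 < h := hh0
  have hh1 : h ≤ 1 := le_of_lt (lt_of_lt_of_le hhδ (min_le_left _ _))
  have hhM : h * M < 1 := by
    have h1 : h < 1 / (M + 1) := lt_of_lt_of_le hhδ
      (le_trans (min_le_right _ _) (min_le_left _ _))
    have h2 : h * (M + 1) < 1 := by
      rw [← lt_div_iff₀ (by positivity)]; exact h1
    nlinarith
  have hhg : h * ‖g₁ w₀‖ < 1 := by
    have h1 : h < 1 / (‖g₁ w₀‖ + 1) := lt_of_lt_of_le hhδ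
      (le_trans (min_le_right _ _) (min_le_right _ _))
    have h2 : h * (‖g₁ w₀‖ + 1) < 1 := by
      rw [← lt_div_iff₀ (by positivity)]; exact h1
    nlinarith [norm_nonneg (g₁ w₀)]
  -- trajectory bound
  have hbnd : ∀ t ∈ Set.Icc (0 : ℝ) h, w h t ∈ Metric.closedBall w₀ 1 →
      ‖G (w h t) + h • Hf (w h t)‖ ≤ M := by
    intro t ht hmem
    calc ‖G (w h t) + h • Hf (w h t)‖ ≤ ‖G (w h t)‖ + ‖h • Hf (w h t)‖ := norm_add_le _ _
      _ ≤ MG + 1 * MH := by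
          refine add_le_add (hMGb _ hmem) ?_
          rw [norm_smul, Real.norm_eq_abs, abs_of_pos hh0]
          exact mul_le_mul hh1 (hMHb _ hmem) (norm_nonneg _) one_pos.le
      _ = M := by rw [hMdef]; ring
  have hTb : ∀ t ∈ Set.Icc (0 : ℝ) h, ‖w h t - w₀‖ ≤ M * t :=
    traj_bound hw0h hM0 (by linarith [mul_comm h M]) hwh hbnd
  have hMh1 : M * h ≤ 1 := by linarith [mul_comm h M]
  have hK : ∀ t ∈ Set.Icc (0 : ℝ) h, w h t ∈ Metric.closedBall w₀ (M * h) := by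
    intro t ht
    rw [Metric.mem_closedBall, dist_eq_norm]
    exact (hTb t ht).trans (mul_le_mul_of_nonneg_left ht.2 hM0)
  have hK1 : ∀ t ∈ Set.Icc (0 : ℝ) h, w h t ∈ Metric.closedBall w₀ 1 := fun t ht =>
    Metric.closedBall_subset_closedBall hMh1 (hK t ht)
  -- first-order estimate for the trajectory
  have claim0 : ∀ t ∈ Set.Icc (0 : ℝ) h,
      ‖w h t - w₀ - t • (G w₀ + h • Hf w₀)‖ ≤ C₀ * h * t := by
    intro t ht
    have key := (convex_Icc (0 : ℝ) h).norm_image_sub_le_of_norm_hasDerivWithin_le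
      (f := fun s => w h s - s • (G w₀ + h • Hf w₀))
      (f' := fun s => (G (w h s) + h • Hf (w h s)) - (G w₀ + h • Hf w₀))
      (C := C₀ * h)
      (fun s hs => (((hwh s hs).sub (by
        simpa using (hasDerivAt_id s).smul_const (G w₀ + h • Hf w₀))).hasDerivWithinAt))
      (fun s hs => by
        have h1 : ‖G (w h s) - G w₀‖ ≤ LG * (M * h) := by
          refine le_trans (hLGb w₀ (Metric.mem_closedBall_self one_pos.le) _ (hK1 s hs)) ?_
          exact mul_le_mul_of_nonneg_left ((hTb s hs).trans
            (mul_le_mul_of_nonneg_left hs.2 hM0)) hLG0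
        have h2 : ‖Hf (w h s) - Hf w₀‖ ≤ LH * (M * h) := by
          refine le_trans (hLHb w₀ (Metric.mem_closedBall_self one_pos.le) _ (hK1 s hs)) ?_
          exact mul_le_mul_of_nonneg_left ((hTb s hs).trans
            (mul_le_mul_of_nonneg_left hs.2 hM0)) hLH0
        have hid : (G (w h s) + h • Hf (w h s)) - (G w₀ + h • Hf w₀)
            = (G (w h s) - G w₀) + h • (Hf (w h s) - Hf w₀) := by module
        show ‖(G (w h s) + h • Hf (w h s)) - (G w₀ + h • Hf w₀)‖ ≤ C₀ * h
        rw [hid]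
        calc ‖(G (w h s) - G w₀) + h • (Hf (w h s) - Hf w₀)‖
            ≤ ‖G (w h s) - G w₀‖ + ‖h • (Hf (w h s) - Hf w₀)‖ := norm_add_le _ _
          _ ≤ LG * (M * h) + h * (LH * (M * h)) := by
              refine add_le_add h1 ?_
              rw [norm_smul, Real.norm_eq_abs, abs_of_pos hh0]
              exact mul_le_mul_of_nonneg_left h2 hh0.le
          _ ≤ C₀ * h := by
              have hX : 0 ≤ LH * (M * h) := by positivity
              have h3 : h * (LH * (M * h)) ≤ LH * (M * h) := mul_le_of_le_one_left hX hh1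
              rw [hC₀def]; nlinarith)
      (Set.left_mem_Icc.mpr hh0.le) ht
    replace key : ‖(w h t - t • (G w₀ + h • Hf w₀))
        - (w h 0 - (0 : ℝ) • (G w₀ + h • Hf w₀))‖ ≤ C₀ * h * ‖t - 0‖ := key
    have : w h 0 - (0 : ℝ) • (G w₀ + h • Hf w₀) = w₀ := by simp [hw0h]
    rw [this] at key
    calc ‖w h t - w₀ - t • (G w₀ + h • Hf w₀)‖
        = ‖w h t - t • (G w₀ + h • Hf w₀) - w₀‖ := by rw [show
            w h t - w₀ - t • (G w₀ + h • Hf w₀)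
            = w h t - t • (G w₀ + h • Hf w₀) - w₀ by abel]
      _ ≤ C₀ * h * ‖t - 0‖ := key
      _ = C₀ * h * t := by
          rw [sub_zero, Real.norm_eq_abs, abs_of_nonneg ht.1]
  -- second-order estimate on the derivative
  have claim1 : ∀ t ∈ Set.Icc (0 : ℝ) h,
      ‖(G (w h t) + h • Hf (w h t)) - (G w₀ + h • Hf w₀)
        - (2 * t) • ((2⁻¹ : ℝ) • A w₀ (G w₀))‖ ≤ C₁ * (h * h) := by
    intro t ht
    have hsmash : (2 * t) • ((2⁻¹ : ℝ) • A w₀ (G w₀)) = t • A w₀ (G w₀) := by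
      rw [smul_smul]; congr 1; ring
    rw [hsmash]
    have ht2 : t ≤ h := ht.2
    have ht0 : 0 ≤ t := ht.1
    have hMh0 : 0 ≤ M * h := by positivity
    -- Taylor bound for G
    have t1 : ‖G (w h t) - G w₀ - A w₀ (w h t - w₀)‖ ≤ (LA * (M * h)) * (M * h) := by
      have tay := taylor_one (convex_closedBall w₀ (M * h))
        (Metric.mem_closedBall_self hMh0) (hK t ht) (fun u _ => hG' u)
        (C := LA * (M * h)) (fun u hu => by
          refine le_trans (hLAb w₀ (Metric.mem_closedBall_self one_pos.le) u
            (Metric.closedBall_subset_closedBall hMh1 hu)) ?_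
          refine mul_le_mul_of_nonneg_left ?_ hLA0
          rw [← dist_eq_norm]
          exact Metric.mem_closedBall.mp hu)
      exact tay.trans (mul_le_mul_of_nonneg_left
        (by rw [← dist_eq_norm]; exact Metric.mem_closedBall.mp (hK t ht)) (by positivity))
    have t2 : ‖A w₀ (w h t - w₀ - t • (G w₀ + h • Hf w₀))‖ ≤ ‖A w₀‖ * (C₀ * h * t) := by
      refine le_trans ((A w₀).le_opNorm _) ?_
      exact mul_le_mul_of_nonneg_left (claim0 t ht) (norm_nonneg _)
    have t3 : ‖(t * h) • A w₀ (Hf w₀)‖ ≤ (h * h) * (‖A w₀‖ * ‖Hf w₀‖) := by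
      rw [norm_smul, Real.norm_eq_abs, abs_of_nonneg (by positivity)]
      refine mul_le_mul ?_ ((A w₀).le_opNorm _) (norm_nonneg _) (by positivity)
      exact mul_le_mul_of_nonneg_right ht2 hh0.le
    have t4 : ‖h • (Hf (w h t) - Hf w₀)‖ ≤ h * (LH * (M * h)) := by
      rw [norm_smul, Real.norm_eq_abs, abs_of_pos hh0]
      refine mul_le_mul_of_nonneg_left ?_ hh0.le
      refine le_trans (hLHb w₀ (Metric.mem_closedBall_self one_pos.le) _ (hK1 t ht)) ?_
      exact mul_le_mul_of_nonneg_left ((hTb t ht).trans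
        (mul_le_mul_of_nonneg_left ht2 hM0)) hLH0
    have hdecomp : (G (w h t) + h • Hf (w h t)) - (G w₀ + h • Hf w₀) - t • A w₀ (G w₀)
        = (G (w h t) - G w₀ - A w₀ (w h t - w₀))
          + A w₀ (w h t - w₀ - t • (G w₀ + h • Hf w₀))
          + (t * h) • A w₀ (Hf w₀)
          + h • (Hf (w h t) - Hf w₀) := by
      have h1 : A w₀ (w h t - w₀ - t • (G w₀ + h • Hf w₀))
          = A w₀ (w h t - w₀) - t • A w₀ (G w₀) - (t * h) • A w₀ (Hf w₀) := by
        rw [map_sub, map_smul, map_add, map_smul, smul_add, smul_smul]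
        module
      rw [h1]
      module
    rw [hdecomp]
    have htri : ‖(G (w h t) - G w₀ - A w₀ (w h t - w₀))
          + A w₀ (w h t - w₀ - t • (G w₀ + h • Hf w₀))
          + (t * h) • A w₀ (Hf w₀)
          + h • (Hf (w h t) - Hf w₀)‖
        ≤ ‖G (w h t) - G w₀ - A w₀ (w h t - w₀)‖
          + ‖A w₀ (w h t - w₀ - t • (G w₀ + h • Hf w₀))‖
          + ‖(t * h) • A w₀ (Hf w₀)‖
          + ‖h • (Hf (w h t) - Hf w₀)‖ := by
      refine le_trans (norm_add_le _ _) ?_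
      refine add_le_add (le_trans (norm_add_le _ _) (add_le_add (norm_add_le _ _) le_rfl)) le_rfl
    refine le_trans htri ?_
    have e1 : (LA * (M * h)) * (M * h) = (LA * M * M) * (h * h) := by ring
    have e2 : ‖A w₀‖ * (C₀ * h * t) ≤ (‖A w₀‖ * C₀) * (h * h) := by
      have h5 : C₀ * h * t ≤ C₀ * (h * h) := by
        nlinarith [mul_nonneg (mul_nonneg hC₀0 hh0.le) (sub_nonneg.mpr ht2)]
      calc ‖A w₀‖ * (C₀ * h * t) ≤ ‖A w₀‖ * (C₀ * (h * h)) :=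
            mul_le_mul_of_nonneg_left h5 (norm_nonneg _)
        _ = (‖A w₀‖ * C₀) * (h * h) := by ring
    have e4 : h * (LH * (M * h)) = (LH * M) * (h * h) := by ring
    rw [hC₁def]
    nlinarith [t1, t2, t3, t4, e2]
  -- integrate: third-order estimate for the trajectory at time h
  have claim2 : ‖w h h - w₀ - h • (G w₀ + h • Hf w₀)
      - (h ^ 2) • ((2⁻¹ : ℝ) • A w₀ (G w₀))‖ ≤ C₁ * (h * h) * h := by
    have key := (convex_Icc (0 : ℝ) h).norm_image_sub_le_of_norm_hasDerivWithin_le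
      (f := fun s => w h s - s • (G w₀ + h • Hf w₀) - (s ^ 2) • ((2⁻¹ : ℝ) • A w₀ (G w₀)))
      (f' := fun s => (G (w h s) + h • Hf (w h s)) - (G w₀ + h • Hf w₀)
        - (2 * s) • ((2⁻¹ : ℝ) • A w₀ (G w₀)))
      (C := C₁ * (h * h))
      (fun s hs => by
        refine HasDerivAt.hasDerivWithinAt ?_
        refine HasDerivAt.sub (HasDerivAt.sub (hwh s hs) ?_) ?_
        · simpa using (hasDerivAt_id s).smul_const (G w₀ + h • Hf w₀)
        · simpa using (hasDerivAt_pow 2 s).smul_const ((2⁻¹ : ℝ) • A w₀ (G w₀)))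
      (fun s hs => claim1 s hs)
      (Set.left_mem_Icc.mpr hh0.le) (Set.right_mem_Icc.mpr hh0.le)
    replace key : ‖(w h h - h • (G w₀ + h • Hf w₀) - (h ^ 2) • ((2⁻¹ : ℝ) • A w₀ (G w₀)))
        - (w h 0 - (0 : ℝ) • (G w₀ + h • Hf w₀)
            - ((0 : ℝ) ^ 2) • ((2⁻¹ : ℝ) • A w₀ (G w₀)))‖ ≤ C₁ * (h * h) * ‖h - 0‖ := key
    have hz : w h 0 - (0 : ℝ) • (G w₀ + h • Hf w₀)
        - ((0 : ℝ) ^ 2) • ((2⁻¹ : ℝ) • A w₀ (G w₀)) = w₀ := by simp [hw0h]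
    rw [hz] at key
    calc ‖w h h - w₀ - h • (G w₀ + h • Hf w₀) - (h ^ 2) • ((2⁻¹ : ℝ) • A w₀ (G w₀))‖
        = ‖(w h h - h • (G w₀ + h • Hf w₀) - (h ^ 2) • ((2⁻¹ : ℝ) • A w₀ (G w₀))) - w₀‖ := by
          rw [show w h h - w₀ - h • (G w₀ + h • Hf w₀) - (h ^ 2) • ((2⁻¹ : ℝ) • A w₀ (G w₀))
            = (w h h - h • (G w₀ + h • Hf w₀) - (h ^ 2) • ((2⁻¹ : ℝ) • A w₀ (G w₀))) - w₀
            by abel]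
      _ ≤ C₁ * (h * h) * ‖h - 0‖ := key
      _ = C₁ * (h * h) * h := by rw [sub_zero, Real.norm_eq_abs, abs_of_pos hh0]
  -- discrete step estimate
  have hvmem : w₀ - h • g₁ w₀ ∈ Metric.closedBall w₀ (h * ‖g₁ w₀‖) := by
    rw [Metric.mem_closedBall, dist_eq_norm]
    rw [show w₀ - h • g₁ w₀ - w₀ = -(h • g₁ w₀) by abel]
    rw [norm_neg, norm_smul, Real.norm_eq_abs, abs_of_pos hh0]
  have hdisc : ‖g₂ (w₀ - h • g₁ w₀) - g₂ w₀ + h • fderiv ℝ g₂ w₀ (g₁ w₀)‖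
      ≤ (L2 * ‖g₁ w₀‖ * ‖g₁ w₀‖) * (h * h) := by
    have tay := taylor_one (convex_closedBall w₀ (h * ‖g₁ w₀‖))
      (Metric.mem_closedBall_self (by positivity)) hvmem (fun u _ => hg₂' u)
      (C := L2 * (h * ‖g₁ w₀‖)) (fun u hu => by
        refine le_trans (hL2b w₀ (Metric.mem_closedBall_self one_pos.le) u
          (Metric.closedBall_subset_closedBall hhg.le hu)) ?_
        refine mul_le_mul_of_nonneg_left ?_ hL20
        rw [← dist_eq_norm]
        exact Metric.mem_closedBall.mp hu)
    have hveq : w₀ - h • g₁ w₀ - w₀ = -(h • g₁ w₀) := by abel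
    rw [hveq, map_neg, map_smul] at tay
    have hre : g₂ (w₀ - h • g₁ w₀) - g₂ w₀ - -(h • fderiv ℝ g₂ w₀ (g₁ w₀))
        = g₂ (w₀ - h • g₁ w₀) - g₂ w₀ + h • fderiv ℝ g₂ w₀ (g₁ w₀) := by module
    rw [hre] at tay
    refine tay.trans ?_
    have : ‖-(h • g₁ w₀)‖ = h * ‖g₁ w₀‖ := by
      rw [norm_neg, norm_smul, Real.norm_eq_abs, abs_of_pos hh0]
    rw [this]
    nlinarith [norm_nonneg (g₁ w₀), hL20, hh0.le]
  -- assemble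
  have hzero : Hf w₀ + (2⁻¹ : ℝ) • A w₀ (G w₀) - α • fderiv ℝ g₂ w₀ (g₁ w₀) = 0 :=
    sub_eq_zero.mpr hkey
  have hrw : w h h - ((w₀ - h • g₁ w₀) - (α * h) • g₂ (w₀ - h • g₁ w₀))
      = (w h h - w₀ - h • (G w₀ + h • Hf w₀) - (h ^ 2) • ((2⁻¹ : ℝ) • A w₀ (G w₀)))
        + (α * h) • (g₂ (w₀ - h • g₁ w₀) - g₂ w₀ + h • fderiv ℝ g₂ w₀ (g₁ w₀))
        + (h ^ 2) • (Hf w₀ + (2⁻¹ : ℝ) • A w₀ (G w₀) - α • fderiv ℝ g₂ w₀ (g₁ w₀)) := by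
    rw [hGw]
    module
  rw [hzero, smul_zero, add_zero] at hrw
  rw [hrw, Real.norm_eq_abs (h ^ 3), abs_of_pos (by positivity)]
  have hn1 : ‖(α * h) • (g₂ (w₀ - h • g₁ w₀) - g₂ w₀ + h • fderiv ℝ g₂ w₀ (g₁ w₀))‖
      ≤ (α * h) * ((L2 * ‖g₁ w₀‖ * ‖g₁ w₀‖) * (h * h)) := by
    rw [norm_smul, Real.norm_eq_abs, abs_of_pos (by positivity)]
    exact mul_le_mul_of_nonneg_left hdisc (by positivity)
  calc ‖(w h h - w₀ - h • (G w₀ + h • Hf w₀) - (h ^ 2) • ((2⁻¹ : ℝ) • A w₀ (G w₀)))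
        + (α * h) • (g₂ (w₀ - h • g₁ w₀) - g₂ w₀ + h • fderiv ℝ g₂ w₀ (g₁ w₀))‖
      ≤ ‖w h h - w₀ - h • (G w₀ + h • Hf w₀) - (h ^ 2) • ((2⁻¹ : ℝ) • A w₀ (G w₀))‖
        + ‖(α * h) • (g₂ (w₀ - h • g₁ w₀) - g₂ w₀ + h • fderiv ℝ g₂ w₀ (g₁ w₀))‖ :=
      norm_add_le _ _
    _ ≤ C₁ * (h * h) * h + (α * h) * ((L2 * ‖g₁ w₀‖ * ‖g₁ w₀‖) * (h * h)) :=
      add_le_add claim2 hn1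
    _ = (C₁ + C₂) * h ^ 3 := by rw [hC₂def]; ring
end key


/-- **Modified equation theorem (Theorem 2 of the paper).**
Two consecutive gradient updates (step `h` on `L₁`, then step `αh` on `L₂`) are shadowed,
up to `O(h³)` as `h → 0⁺`, by the time-`h` solution of the modified equation
`ẇ = −∇L̃_h(w) + (hα/2)[∇L₁,∇L₂](w)` started at `w₀`, where
`L̃_h(w) = L₁(w) + αL₂(w) + (h/4)‖∇L₁(w)‖² + (hα²/4)‖∇L₂(w)‖²`. -/
theorem stmt_4 (d : ℕ) (L₁ L₂ : EuclideanSpace ℝ (Fin d) → ℝ)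
    (hL₁ : ContDiff ℝ 3 L₁) (hL₂ : ContDiff ℝ 3 L₂) (α : ℝ) (hα : 0 < α)
    (w₀ : EuclideanSpace ℝ (Fin d))
    (w : ℝ → ℝ → EuclideanSpace ℝ (Fin d))
    (hw0 : ∀ᶠ h in nhdsWithin (0 : ℝ) (Set.Ioi 0), w h 0 = w₀)
    (hw : ∀ᶠ h in nhdsWithin (0 : ℝ) (Set.Ioi 0), ∀ t ∈ Set.Icc (0 : ℝ) h,
      HasDerivAt (w h)
        (-gradient (fun u => L₁ u + α * L₂ u + (h / 4) * ‖gradient L₁ u‖ ^ 2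
              + (h * α ^ 2 / 4) * ‖gradient L₂ u‖ ^ 2) (w h t)
          + (h * α / 2) •
            (fderiv ℝ (gradient L₂) (w h t) (gradient L₁ (w h t))
              - fderiv ℝ (gradient L₁) (w h t) (gradient L₂ (w h t)))) t) :
    (fun h : ℝ =>
        w h h - ((w₀ - h • gradient L₁ w₀)
          - (α * h) • gradient L₂ (w₀ - h • gradient L₁ w₀)))
      =O[nhdsWithin 0 (Set.Ioi 0)] (fun h : ℝ => h ^ 3) := by
  have hg₁ : ContDiff ℝ 2 (gradient L₁) := contDiff_gradient hL₁
  have hg₂ : ContDiff ℝ 2 (gradient L₂) := contDiff_gradient hL₂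
  have hD₁ : ContDiff ℝ 1 (fderiv ℝ (gradient L₁)) := hg₁.fderiv_right (by norm_num)
  have hD₂ : ContDiff ℝ 1 (fderiv ℝ (gradient L₂)) := hg₂.fderiv_right (by norm_num)
  refine key_est
    (fun u => -(gradient L₁ u + α • gradient L₂ u))
    (fun u => (α / 2) • (fderiv ℝ (gradient L₂) u (gradient L₁ u)
        - fderiv ℝ (gradient L₁) u (gradient L₂ u))
      - (2⁻¹ : ℝ) • fderiv ℝ (gradient L₁) u (gradient L₁ u)
      - (α ^ 2 / 2) • fderiv ℝ (gradient L₂) u (gradient L₂ u))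
    (fun u => -(fderiv ℝ (gradient L₁) u + α • fderiv ℝ (gradient L₂) u))
    (gradient L₁) (gradient L₂)
    (((hg₁.of_le one_le_two).add ((hg₂.of_le one_le_two).const_smul α)).neg)
    ?_ ((hD₁.add (hD₂.const_smul α)).neg) ?_ hg₂ α hα w₀ rfl ?_ w hw0 ?_
  · -- smoothness of Hf
    have p1 : ContDiff ℝ 1 (fun u => fderiv ℝ (gradient L₂) u (gradient L₁ u)) :=
      hD₂.clm_apply (hg₁.of_le one_le_two)
    have p2 : ContDiff ℝ 1 (fun u => fderiv ℝ (gradient L₁) u (gradient L₂ u)) :=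
      hD₁.clm_apply (hg₂.of_le one_le_two)
    have p3 : ContDiff ℝ 1 (fun u => fderiv ℝ (gradient L₁) u (gradient L₁ u)) :=
      hD₁.clm_apply (hg₁.of_le one_le_two)
    have p4 : ContDiff ℝ 1 (fun u => fderiv ℝ (gradient L₂) u (gradient L₂ u)) :=
      hD₂.clm_apply (hg₂.of_le one_le_two)
    exact (((p1.sub p2).const_smul (α / 2)).sub (p3.const_smul (2⁻¹ : ℝ))).sub
      (p4.const_smul (α ^ 2 / 2))
  · -- G has derivative A
    intro u
    exact (((hg₁.differentiable two_ne_zero u).hasFDerivAt).add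
      (((hg₂.differentiable two_ne_zero u).hasFDerivAt).const_smul α)).neg
  · -- the key algebraic identity
    simp only [ContinuousLinearMap.neg_apply, ContinuousLinearMap.add_apply,
      ContinuousLinearMap.smul_apply, map_neg, map_add, map_smul]
    module
  · -- the ODE hypothesis in the reduced form
    refine hw.mono (fun h hh t ht => ?_)
    have hbase := hh t ht
    have veq : -gradient (fun u => L₁ u + α * L₂ u + (h / 4) * ‖gradient L₁ u‖ ^ 2
          + (h * α ^ 2 / 4) * ‖gradient L₂ u‖ ^ 2) (w h t)
        + (h * α / 2) • (fderiv ℝ (gradient L₂) (w h t) (gradient L₁ (w h t))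
            - fderiv ℝ (gradient L₁) (w h t) (gradient L₂ (w h t)))
        = -(gradient L₁ (w h t) + α • gradient L₂ (w h t))
          + h • ((α / 2) • (fderiv ℝ (gradient L₂) (w h t) (gradient L₁ (w h t))
              - fderiv ℝ (gradient L₁) (w h t) (gradient L₂ (w h t)))
            - (2⁻¹ : ℝ) • fderiv ℝ (gradient L₁) (w h t) (gradient L₁ (w h t))
            - (α ^ 2 / 2) • fderiv ℝ (gradient L₂) (w h t) (gradient L₂ (w h t))) := by
      rw [gradient_modified hL₁ hL₂ α h (w h t)]
      module
    exact veq ▸ hbase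

end AuxStmt4
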